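/- arXiv:1201.0224 — 2 statements merged into one kernel-verified Lean document; each statement's English description precedes it below -/
import Mathlib

section
/- Let X₁,...,Xₙ be independent zero-mean real random variables with (1/n)·Σᵢ E[|Xᵢ|^r] ≤ C for some r ∈ [1,2] and C > 0. Then for any ℓ > 0, P( |Σᵢ Xᵢ|/n > ℓ·n^{-(1−1/r)} ) ≤ 2C/ℓ^r. -/
open MeasureTheory ProbabilityTheory Real Filter intervalIntegral

noncomputable def vbePhi (s : ℝ) (x : ℝ) : ℝ := Real.sign x * |x| ^ s

lemma vbe_abs_sign_le_one (x : ℝ) : |Real.sign x| ≤ 1 := by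
  rcases lt_trichotomy x 0 with h|h|h
  · simp [Real.sign_of_neg h]
  · simp [h, Real.sign_zero]
  · simp [Real.sign_of_pos h]

lemma vbePhi_of_nonneg {s : ℝ} (hs : s ≠ 0) {x : ℝ} (hx : 0 ≤ x) :
    vbePhi s x = x ^ s := by
  rcases eq_or_lt_of_le hx with rfl|hx
  · simp [vbePhi, Real.sign_zero, Real.zero_rpow hs]
  · simp [vbePhi, Real.sign_of_pos hx, abs_of_pos hx]

lemma vbePhi_neg (s : ℝ) (x : ℝ) : vbePhi s (-x) = -vbePhi s x := by
  simp [vbePhi, Real.sign_neg, abs_neg]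

lemma vbePhi_abs_le {s : ℝ} (x : ℝ) : |vbePhi s x| ≤ |x| ^ s := by
  rw [vbePhi, abs_mul, abs_of_nonneg (Real.rpow_nonneg (abs_nonneg x) s)]
  calc |Real.sign x| * |x| ^ s ≤ 1 * |x| ^ s := by
        exact mul_le_mul_of_nonneg_right (vbe_abs_sign_le_one x)
          (Real.rpow_nonneg (abs_nonneg x) s)
    _ = |x| ^ s := one_mul _

lemma vbe_rpow_add_le {s : ℝ} (hs0 : 0 ≤ s) (hs1 : s ≤ 1) {u v : ℝ} (hu : 0 ≤ u)
    (hv : 0 ≤ v) : (u + v) ^ s ≤ u ^ s + v ^ s := by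
  lift u to NNReal using hu
  lift v to NNReal using hv
  have := NNReal.rpow_add_le_add_rpow u v hs0 hs1
  exact_mod_cast this

lemma vbe_rpow_sub_le {s : ℝ} (hs0 : 0 ≤ s) (hs1 : s ≤ 1) {u v : ℝ} (hv : 0 ≤ v)
    (hvu : v ≤ u) : u ^ s - v ^ s ≤ (u - v) ^ s := by
  have h := vbe_rpow_add_le hs0 hs1 (sub_nonneg.2 hvu) hv
  rw [sub_add_cancel] at h
  linarith

lemma vbePhi_holder_aux {s : ℝ} (hs0 : 0 < s) (hs1 : s ≤ 1) {a b : ℝ} (hba : b ≤ a) :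
    vbePhi s a - vbePhi s b ≤ 2 * |a - b| ^ s := by
  have habs : |a - b| = a - b := abs_of_nonneg (by linarith)
  rcases le_total 0 b with hb | hb
  · -- 0 ≤ b ≤ a
    rw [vbePhi_of_nonneg hs0.ne' (hb.trans hba), vbePhi_of_nonneg hs0.ne' hb, habs]
    have := vbe_rpow_sub_le hs0.le hs1 hb hba
    have h2 : (0:ℝ) ≤ (a - b) ^ s := Real.rpow_nonneg (by linarith) s
    linarith
  · rcases le_total a 0 with ha | ha
    · -- b ≤ a ≤ 0
      have h1 : vbePhi s a = -((-a) ^ s) := by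
        have h := vbePhi_neg s (-a)
        rw [neg_neg] at h
        rw [h, vbePhi_of_nonneg hs0.ne' (neg_nonneg.2 ha)]
      have h2 : vbePhi s b = -((-b) ^ s) := by
        have h := vbePhi_neg s (-b)
        rw [neg_neg] at h
        rw [h, vbePhi_of_nonneg hs0.ne' (by linarith : (0:ℝ) ≤ -b)]
      rw [h1, h2, habs]
      have := vbe_rpow_sub_le hs0.le hs1 (neg_nonneg.2 ha) (by linarith : -a ≤ -b)
      have h3 : -b - -a = a - b := by ring
      rw [h3] at this
      have h4 : (0:ℝ) ≤ (a - b) ^ s := Real.rpow_nonneg (by linarith) s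
      linarith
    · -- b ≤ 0 ≤ a
      rw [vbePhi_of_nonneg hs0.ne' ha, habs]
      have h2 : vbePhi s b = -((-b) ^ s) := by
        have h := vbePhi_neg s (-b)
        rw [neg_neg] at h
        rw [h, vbePhi_of_nonneg hs0.ne' (by linarith : (0:ℝ) ≤ -b)]
      rw [h2]
      have ha' : a ^ s ≤ (a - b) ^ s := Real.rpow_le_rpow ha (by linarith) hs0.le
      have hb' : (-b) ^ s ≤ (a - b) ^ s :=
        Real.rpow_le_rpow (by linarith) (by linarith) hs0.le
      linarith

lemma vbePhi_mono {s : ℝ} (hs0 : 0 < s) : Monotone (vbePhi s) := by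
  intro a b hab
  rcases le_total 0 a with ha | ha
  · rw [vbePhi_of_nonneg hs0.ne' ha, vbePhi_of_nonneg hs0.ne' (ha.trans hab)]
    exact Real.rpow_le_rpow ha hab hs0.le
  · rcases le_total b 0 with hb | hb
    · have h1 : vbePhi s a = -((-a) ^ s) := by
        have h := vbePhi_neg s (-a)
        rw [neg_neg] at h
        rw [h, vbePhi_of_nonneg hs0.ne' (neg_nonneg.2 ha)]
      have h2 : vbePhi s b = -((-b) ^ s) := by
        have h := vbePhi_neg s (-b)
        rw [neg_neg] at h
        rw [h, vbePhi_of_nonneg hs0.ne' (neg_nonneg.2 hb)]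
      rw [h1, h2, neg_le_neg_iff]
      exact Real.rpow_le_rpow (neg_nonneg.2 hb) (by linarith) hs0.le
    · have h1 : vbePhi s a ≤ 0 := by
        have h := vbePhi_neg s (-a)
        rw [neg_neg] at h
        rw [h, vbePhi_of_nonneg hs0.ne' (neg_nonneg.2 ha)]
        simp [Real.rpow_nonneg (neg_nonneg.2 ha) s]
      have h2 : 0 ≤ vbePhi s b := by
        rw [vbePhi_of_nonneg hs0.ne' hb]
        exact Real.rpow_nonneg hb s
      linarith

lemma vbePhi_holder {s : ℝ} (hs0 : 0 < s) (hs1 : s ≤ 1) (a b : ℝ) :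
    |vbePhi s a - vbePhi s b| ≤ 2 * |a - b| ^ s := by
  rcases le_total b a with h | h
  · rw [abs_of_nonneg (sub_nonneg.2 (vbePhi_mono hs0 h))]
    exact vbePhi_holder_aux hs0 hs1 h
  · rw [abs_sub_comm, abs_sub_comm a b]
    rw [abs_of_nonneg (sub_nonneg.2 (vbePhi_mono hs0 h))]
    exact vbePhi_holder_aux hs0 hs1 h

lemma vbe_continuous_abs_rpow {s : ℝ} (hs : 0 ≤ s) :
    Continuous fun u : ℝ => |u| ^ s :=
  continuous_abs.rpow_const (fun x => Or.inr hs)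

lemma vbePhi_continuous {s : ℝ} (hs : 0 < s) : Continuous (vbePhi s) := by
  rw [continuous_iff_continuousAt]
  intro t
  rcases lt_trichotomy t 0 with ht | rfl | ht
  · have hev : ∀ᶠ u in nhds t, -((-u) ^ s) = vbePhi s u := by
      filter_upwards [eventually_lt_nhds ht] with u hu
      have h := vbePhi_neg s (-u)
      rw [neg_neg] at h
      rw [h, vbePhi_of_nonneg hs.ne' (by linarith : (0:ℝ) ≤ -u)]
    refine ContinuousAt.congr ?_ hev
    exact (((Real.continuousAt_rpow_const (-t) s (Or.inl (by linarith))).comp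
      (continuous_neg.continuousAt))).neg
  · have h0 : vbePhi s 0 = 0 := by simp [vbePhi]
    rw [ContinuousAt, h0]
    have hcont : Continuous fun u : ℝ => |u| ^ s := vbe_continuous_abs_rpow hs.le
    have htd := hcont.tendsto 0
    rw [abs_zero, Real.zero_rpow hs.ne'] at htd
    exact squeeze_zero_norm
      (fun u => by simpa [Real.norm_eq_abs] using vbePhi_abs_le (s := s) u) htd
  · have hev : ∀ᶠ u in nhds t, u ^ s = vbePhi s u := by
      filter_upwards [eventually_gt_nhds ht] with u hu
      rw [vbePhi_of_nonneg hs.ne' hu.le]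
    refine ContinuousAt.congr ?_ hev
    exact Real.continuousAt_rpow_const t s (Or.inl ht.ne')

lemma vbe_hasDerivAt {r : ℝ} (hr : 1 < r) (t : ℝ) :
    HasDerivAt (fun u : ℝ => |u| ^ r) (r * vbePhi (r - 1) t) t := by
  have hs : (0:ℝ) < r - 1 := by linarith
  rcases lt_trichotomy t 0 with ht | rfl | ht
  · have h := (Real.hasDerivAt_rpow_const (x := -t) (p := r) (Or.inl (by linarith))).comp t
      (hasDerivAt_neg t)
    have hφ : vbePhi (r - 1) t = -((-t) ^ (r - 1)) := by
      have h2 := vbePhi_neg (r - 1) (-t)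
      rw [neg_neg] at h2
      rw [h2, vbePhi_of_nonneg hs.ne' (by linarith : (0:ℝ) ≤ -t)]
    have heq : (fun u : ℝ => (-u) ^ r) =ᶠ[nhds t] fun u : ℝ => |u| ^ r := by
      filter_upwards [eventually_lt_nhds ht] with u hu
      rw [abs_of_neg hu]
    have := h.congr_of_eventuallyEq heq.symm
    refine this.congr_deriv ?_
    rw [hφ]; ring
  · have h0 : vbePhi (r - 1) 0 = 0 := by simp [vbePhi]
    rw [h0, mul_zero, hasDerivAt_iff_tendsto_slope]
    have hb : ∀ u : ℝ, ‖slope (fun u : ℝ => |u| ^ r) 0 u‖ ≤ |u| ^ (r - 1) := by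
      intro u
      rcases eq_or_ne u 0 with rfl | hu
      · simp [slope, Real.zero_rpow (by positivity : r - 1 ≠ 0)]
      · have habs : |u| ≠ 0 := abs_ne_zero.2 hu
        rw [slope_def_field]
        have h1 : (|u| ^ r - |(0:ℝ)| ^ r) / (u - 0) = |u| ^ r / u := by
          simp [Real.zero_rpow (by positivity : r ≠ 0)]
        rw [h1, Real.norm_eq_abs, abs_div, abs_of_nonneg
          (Real.rpow_nonneg (abs_nonneg u) r), Real.rpow_sub_one habs]
    refine squeeze_zero_norm hb ?_
    have h := (vbe_continuous_abs_rpow (by linarith : (0:ℝ) ≤ r - 1)).tendsto 0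
    rw [abs_zero, Real.zero_rpow hs.ne'] at h
    exact h.mono_left nhdsWithin_le_nhds
  · have h := Real.hasDerivAt_rpow_const (x := t) (p := r) (Or.inl ht.ne')
    have heq : (fun u : ℝ => u ^ r) =ᶠ[nhds t] fun u : ℝ => |u| ^ r := by
      filter_upwards [eventually_gt_nhds ht] with u hu
      rw [abs_of_pos hu]
    have := h.congr_of_eventuallyEq heq.symm
    refine this.congr_deriv ?_
    rw [vbePhi_of_nonneg hs.ne' ht.le]

lemma vbe_pointwise_aux {r : ℝ} (hr1 : 1 < r) (hr2 : r ≤ 2) (x : ℝ) {y : ℝ} (hy : 0 ≤ y) :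
    |x + y| ^ r ≤ |x| ^ r + r * vbePhi (r - 1) x * y + 2 * |y| ^ r := by
  have hs : (0:ℝ) < r - 1 := by linarith
  have hs1 : r - 1 ≤ 1 := by linarith
  have hr0 : (0:ℝ) < r := by linarith
  -- FTC
  have hderiv : ∀ t ∈ Set.uIcc (0:ℝ) y,
      HasDerivAt (fun u : ℝ => |x + u| ^ r) (r * vbePhi (r - 1) (x + t)) t := by
    intro t _
    have h := (vbe_hasDerivAt hr1 (x + t)).comp t ((hasDerivAt_id t).const_add x)
    rw [mul_one] at h
    exact h
  have hcont : Continuous fun t : ℝ => r * vbePhi (r - 1) (x + t) :=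
    continuous_const.mul ((vbePhi_continuous hs).comp (continuous_const.add continuous_id))
  have hftc := intervalIntegral.integral_eq_sub_of_hasDerivAt hderiv
    (hcont.intervalIntegrable 0 y)
  -- the comparison integral
  have hmono : ∫ t in (0:ℝ)..y, (r * vbePhi (r - 1) (x + t) - r * vbePhi (r - 1) x)
      ≤ ∫ t in (0:ℝ)..y, 2 * r * |t| ^ (r - 1) := by
    refine intervalIntegral.integral_mono_on hy ?_ ?_ ?_
    · exact (hcont.sub continuous_const).intervalIntegrable 0 y
    · exact ((continuous_const.mul (vbe_continuous_abs_rpow hs.le))).intervalIntegrable 0 y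
    · intro t ht
      have h := vbePhi_holder hs hs1 (x + t) x
      have h2 : vbePhi (r-1) (x + t) - vbePhi (r-1) x ≤ 2 * |t| ^ (r-1) := by
        have h3 : |x + t - x| = |t| := by ring_nf
        rw [h3] at h
        exact (le_abs_self _).trans h
      nlinarith [Real.rpow_nonneg (abs_nonneg t) (r-1)]
  have heval : ∫ t in (0:ℝ)..y, 2 * r * |t| ^ (r - 1) = 2 * y ^ r := by
    have hcongr : ∫ t in (0:ℝ)..y, 2 * r * |t| ^ (r - 1)
        = ∫ t in (0:ℝ)..y, 2 * r * t ^ (r - 1) := by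
      refine intervalIntegral.integral_congr ?_
      intro t ht
      rw [Set.uIcc_of_le hy] at ht
      show 2 * r * |t| ^ (r - 1) = 2 * r * t ^ (r - 1)
      rw [abs_of_nonneg ht.1]
    rw [hcongr, intervalIntegral.integral_const_mul,
      integral_rpow (Or.inl (by linarith : (-1:ℝ) < r - 1))]
    rw [sub_add_cancel, Real.zero_rpow hr0.ne']
    field_simp
    ring
  have hconst : ∫ t in (0:ℝ)..y, r * vbePhi (r - 1) x = r * vbePhi (r - 1) x * y := by
    rw [intervalIntegral.integral_const]
    simp [mul_comm]
  have hsplit : ∫ t in (0:ℝ)..y, (r * vbePhi (r - 1) (x + t) - r * vbePhi (r - 1) x)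
      = (|x + y| ^ r - |x + 0| ^ r) - r * vbePhi (r - 1) x * y := by
    rw [intervalIntegral.integral_sub (hcont.intervalIntegrable 0 y)
      (continuous_const.intervalIntegrable 0 y), hftc, hconst]
  rw [hsplit] at hmono
  rw [heval] at hmono
  have hyabs : |y| ^ r = y ^ r := by rw [abs_of_nonneg hy]
  rw [hyabs]
  simp only [add_zero] at hmono
  linarith

lemma vbe_pointwise {r : ℝ} (hr1 : 1 ≤ r) (hr2 : r ≤ 2) (x y : ℝ) :
    |x + y| ^ r ≤ |x| ^ r + r * vbePhi (r - 1) x * y + 2 * |y| ^ r := by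
  rcases eq_or_lt_of_le hr1 with rfl | hr
  · -- r = 1
    simp only [Real.rpow_one, sub_self]
    have h1 : vbePhi 0 x = Real.sign x := by simp [vbePhi]
    rw [h1, one_mul]
    have h2 : |Real.sign x * y| ≤ |y| := by
      rw [abs_mul]
      calc |Real.sign x| * |y| ≤ 1 * |y| :=
            mul_le_mul_of_nonneg_right (vbe_abs_sign_le_one x) (abs_nonneg y)
        _ = |y| := one_mul _
    have h3 := abs_add_le x y
    have h4 := neg_abs_le (Real.sign x * y)
    have h5 := abs_le.1 h2
    linarith [h5.1]
  · rcases le_total 0 y with hy | hy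
    · exact vbe_pointwise_aux hr hr2 x hy
    · have h := vbe_pointwise_aux hr hr2 (-x) (y := -y) (by linarith)
      rw [← neg_add, abs_neg, abs_neg, abs_neg, vbePhi_neg] at h
      have heq : r * -vbePhi (r-1) x * -y = r * vbePhi (r-1) x * y := by ring
      rw [heq] at h
      exact h

lemma vbePhi_measurable {s : ℝ} (hs : 0 ≤ s) : Measurable (vbePhi s) := by
  rcases eq_or_lt_of_le hs with rfl | hs
  · have : vbePhi 0 = Real.sign := by
      funext x; simp [vbePhi]
    rw [this]
    have : Real.sign = fun r : ℝ => if r < 0 then (-1:ℝ) else if 0 < r then 1 else 0 := by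
      funext r; rfl
    rw [this]
    exact Measurable.ite measurableSet_Iio measurable_const
      (Measurable.ite measurableSet_Ioi measurable_const measurable_const)
  · exact (vbePhi_continuous hs).measurable

lemma vbe_rpow_add_bound {r : ℝ} (hr0 : 0 ≤ r) (hr2 : r ≤ 2) (x y : ℝ) :
    |x + y| ^ r ≤ 4 * (|x| ^ r + |y| ^ r) := by
  set m := max |x| |y| with hm
  have hm0 : 0 ≤ m := le_trans (abs_nonneg x) (le_max_left _ _)
  have h1 : |x + y| ≤ 2 * m := by
    calc |x + y| ≤ |x| + |y| := abs_add_le x y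
      _ ≤ m + m := add_le_add (le_max_left _ _) (le_max_right _ _)
      _ = 2 * m := by ring
  have h2 : |x + y| ^ r ≤ (2 * m) ^ r := Real.rpow_le_rpow (abs_nonneg _) h1 hr0
  have h3 : (2 * m) ^ r = 2 ^ r * m ^ r := Real.mul_rpow (by norm_num) hm0
  have h4 : (2:ℝ) ^ r ≤ 2 ^ (2:ℝ) := Real.rpow_le_rpow_of_exponent_le (by norm_num) hr2
  have h5 : (2:ℝ) ^ (2:ℝ) = 4 := by
    rw [show (2:ℝ) = ((2:ℕ):ℝ) by norm_num, Real.rpow_natCast]; norm_num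
  have h6 : m ^ r ≤ |x| ^ r + |y| ^ r := by
    rcases max_cases |x| |y| with ⟨hmx, _⟩ | ⟨hmy, _⟩
    · rw [hm, hmx]
      have := Real.rpow_nonneg (abs_nonneg y) r
      linarith
    · rw [hm, hmy]
      have := Real.rpow_nonneg (abs_nonneg x) r
      linarith
  have hmr : 0 ≤ m ^ r := Real.rpow_nonneg hm0 r
  have h2r : 0 ≤ (2:ℝ) ^ r := Real.rpow_nonneg (by norm_num) r
  calc |x + y| ^ r ≤ 2 ^ r * m ^ r := by rw [← h3]; exact h2
    _ ≤ 4 * m ^ r := mul_le_mul_of_nonneg_right (by linarith) hmr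
    _ ≤ 4 * (|x| ^ r + |y| ^ r) := by linarith

/-- `|z| ≤ 1 + |z|^r` and `|z|^(r-1) ≤ 1 + |z|^r` for `r ≥ 1`. -/
lemma vbe_abs_le_one_add {r : ℝ} (hr1 : 1 ≤ r) (z : ℝ) : |z| ≤ 1 + |z| ^ r := by
  rcases le_total |z| 1 with h | h
  · have := Real.rpow_nonneg (abs_nonneg z) r
    linarith
  · have h2 : |z| ^ (1:ℝ) ≤ |z| ^ r := Real.rpow_le_rpow_of_exponent_le h hr1
    rw [Real.rpow_one] at h2
    linarith

lemma vbe_abs_rpow_le_one_add {r : ℝ} (hr1 : 1 ≤ r) (z : ℝ) :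
    |z| ^ (r - 1) ≤ 1 + |z| ^ r := by
  rcases le_total |z| 1 with h | h
  · have h1 : |z| ^ (r - 1) ≤ 1 := Real.rpow_le_one (abs_nonneg z) h (by linarith)
    have := Real.rpow_nonneg (abs_nonneg z) r
    linarith
  · have h2 : |z| ^ (r - 1) ≤ |z| ^ r :=
      Real.rpow_le_rpow_of_exponent_le h (by linarith)
    have : (0:ℝ) ≤ |z| ^ (r-1) := Real.rpow_nonneg (abs_nonneg z) _
    linarith

section prob
variable {Ω : Type*} [MeasurableSpace Ω] {μ : Measure Ω} [IsProbabilityMeasure μ]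

lemma vbe_integrable_self {r : ℝ} (hr1 : 1 ≤ r) {f : Ω → ℝ} (hf : Measurable f)
    (hint : Integrable (fun ω => |f ω| ^ r) μ) : Integrable f μ := by
  refine Integrable.mono' ((integrable_const (1:ℝ)).add hint) hf.aestronglyMeasurable
    (Filter.Eventually.of_forall fun ω => ?_)
  simpa [Real.norm_eq_abs] using vbe_abs_le_one_add hr1 (f ω)

lemma vbe_integrable_phi {r : ℝ} (hr1 : 1 ≤ r) {f : Ω → ℝ} (hf : Measurable f)
    (hint : Integrable (fun ω => |f ω| ^ r) μ) :
    Integrable (fun ω => vbePhi (r - 1) (f ω)) μ := by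
  refine Integrable.mono' ((integrable_const (1:ℝ)).add hint)
    ((vbePhi_measurable (by linarith : (0:ℝ) ≤ r - 1)).comp hf).aestronglyMeasurable
    (Filter.Eventually.of_forall fun ω => ?_)
  have h1 := vbePhi_abs_le (s := r - 1) (f ω)
  have h2 := vbe_abs_rpow_le_one_add hr1 (f ω)
  simp only [Real.norm_eq_abs, Pi.add_apply]
  exact h1.trans h2

end prob

section prob
variable {Ω : Type*} [MeasurableSpace Ω] {μ : Measure Ω} [IsProbabilityMeasure μ]


/-- von Bahr–Esseen: `E|Σ Xᵢ|^r ≤ 2 Σ E|Xᵢ|^r`. -/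
lemma vbe_main {n : ℕ} (X : Fin n → Ω → ℝ) {r : ℝ} (hr1 : 1 ≤ r) (hr2 : r ≤ 2)
    (hmeas : ∀ i, Measurable (X i))
    (hindep : iIndepFun X μ)
    (hint : ∀ i, Integrable (fun ω => |X i ω| ^ r) μ)
    (hmean : ∀ i, ∫ ω, X i ω ∂μ = 0) (s : Finset (Fin n)) :
    Integrable (fun ω => |∑ i ∈ s, X i ω| ^ r) μ ∧
      ∫ ω, |∑ i ∈ s, X i ω| ^ r ∂μ ≤ 2 * ∑ i ∈ s, ∫ ω, |X i ω| ^ r ∂μ := by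
  have hr0 : (0:ℝ) < r := by linarith
  induction s using Finset.induction_on with
  | empty =>
    simp only [Finset.sum_empty, abs_zero, Real.zero_rpow hr0.ne']
    exact ⟨integrable_const 0, by simp⟩
  | insert a s ha ih =>
    obtain ⟨ihInt, ihLe⟩ := ih
    set S : Ω → ℝ := fun ω => ∑ i ∈ s, X i ω with hS
    have hSmeas : Measurable S := Finset.measurable_sum s fun i _ => hmeas i
    have hSsum : (∑ i ∈ s, X i) = S := by
      funext ω; simp [hS, Finset.sum_apply]
    have hindepSa : IndepFun S (X a) μ := by
      have h := hindep.indepFun_finset_sum_of_notMem hmeas ha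
      rwa [hSsum] at h
    have hXa : Integrable (X a) μ := vbe_integrable_self hr1 (hmeas a) (hint a)
    have hφS : Integrable (fun ω => vbePhi (r - 1) (S ω)) μ :=
      vbe_integrable_phi hr1 hSmeas ihInt
    have hφmeas : Measurable (vbePhi (r - 1)) := vbePhi_measurable (by linarith)
    have hindepφ : IndepFun (fun ω => vbePhi (r - 1) (S ω)) (X a) μ :=
      hindepSa.comp hφmeas measurable_id
    have hcrossInt : Integrable (fun ω => vbePhi (r - 1) (S ω) * X a ω) μ :=
      hindepφ.integrable_mul hφS hXa
    have hcrossZero : ∫ ω, vbePhi (r - 1) (S ω) * X a ω ∂μ = 0 := by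
      rw [hindepφ.integral_fun_mul_eq_mul_integral hφS.aestronglyMeasurable hXa.aestronglyMeasurable,
        hmean a, mul_zero]
    -- LHS integrable
    have hLmeas : Measurable fun ω => |S ω + X a ω| ^ r :=
      (vbe_continuous_abs_rpow (by linarith : (0:ℝ) ≤ r)).measurable.comp
        (hSmeas.add (hmeas a))
    have hLInt : Integrable (fun ω => |S ω + X a ω| ^ r) μ := by
      refine Integrable.mono' ((ihInt.add (hint a)).const_mul 4)
        hLmeas.aestronglyMeasurable (Filter.Eventually.of_forall fun ω => ?_)
      have h := vbe_rpow_add_bound (by linarith) hr2 (S ω) (X a ω)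
      have h0 : (0:ℝ) ≤ |S ω + X a ω| ^ r := Real.rpow_nonneg (abs_nonneg _) r
      simpa [Real.norm_eq_abs, abs_of_nonneg h0] using h
    have hsum_insert : ∀ ω, ∑ i ∈ insert a s, X i ω = S ω + X a ω := by
      intro ω
      rw [Finset.sum_insert ha, add_comm]
    constructor
    · refine hLInt.congr (Filter.Eventually.of_forall fun ω => ?_)
      show |S ω + X a ω| ^ r = |∑ i ∈ insert a s, X i ω| ^ r
      rw [hsum_insert ω]
    · have hRInt : Integrable
          (fun ω => |S ω| ^ r + r * (vbePhi (r - 1) (S ω) * X a ω) + 2 * |X a ω| ^ r) μ :=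
        (ihInt.add (hcrossInt.const_mul r)).add ((hint a).const_mul 2)
      have hle : ∫ ω, |∑ i ∈ insert a s, X i ω| ^ r ∂μ
          ≤ ∫ ω, (|S ω| ^ r + r * (vbePhi (r - 1) (S ω) * X a ω) + 2 * |X a ω| ^ r) ∂μ := by
        have hLInt' : Integrable (fun ω => |∑ i ∈ insert a s, X i ω| ^ r) μ :=
          hLInt.congr (Filter.Eventually.of_forall fun ω => by
            show |S ω + X a ω| ^ r = |∑ i ∈ insert a s, X i ω| ^ r
            rw [hsum_insert ω])
        refine integral_mono hLInt' hRInt fun ω => ?_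
        rw [hsum_insert ω]
        have h := vbe_pointwise hr1 hr2 (S ω) (X a ω)
        linarith [h]
      have hRval : ∫ ω, (|S ω| ^ r + r * (vbePhi (r - 1) (S ω) * X a ω) + 2 * |X a ω| ^ r) ∂μ
          = ∫ ω, |S ω| ^ r ∂μ + 2 * ∫ ω, |X a ω| ^ r ∂μ := by
        have h12 : Integrable
            (fun ω => |S ω| ^ r + r * (vbePhi (r - 1) (S ω) * X a ω)) μ :=
          ihInt.add (hcrossInt.const_mul r)
        rw [integral_add h12 ((hint a).const_mul 2),
          integral_add ihInt (hcrossInt.const_mul r), MeasureTheory.integral_const_mul,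
          MeasureTheory.integral_const_mul, hcrossZero, mul_zero, add_zero]
      rw [Finset.sum_insert ha, mul_add]
      rw [hRval] at hle
      linarith
end prob

/-- Von Bahr–Esseen law of large numbers: for independent zero-mean `Xᵢ` with
`(1/n)·Σ E|Xᵢ|^r ≤ C`, `r ∈ [1,2]`, `P(|Σ Xᵢ|/n > ℓ·n^{-(1-1/r)}) ≤ 2C/ℓ^r`. -/
theorem stmt4 {Ω : Type*} [MeasurableSpace Ω] (μ : Measure Ω) [IsProbabilityMeasure μ]
    (n : ℕ) (hn : 0 < n) (X : Fin n → Ω → ℝ) (r C ℓ : ℝ)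
    (hr1 : 1 ≤ r) (hr2 : r ≤ 2) (hC : 0 < C) (hℓ : 0 < ℓ)
    (hmeas : ∀ i, Measurable (X i))
    (hindep : iIndepFun X μ)
    (hint : ∀ i, Integrable (fun ω => |X i ω| ^ r) μ)
    (hmean : ∀ i, ∫ ω, X i ω ∂μ = 0)
    (hmom : (1 / n : ℝ) * ∑ i, ∫ ω, |X i ω| ^ r ∂μ ≤ C) :
    μ {ω | ℓ * (n : ℝ) ^ (-(1 - 1 / r)) < |∑ i, X i ω| / n} ≤
      ENNReal.ofReal (2 * C / ℓ ^ r) := by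
  have hr0 : (0:ℝ) < r := by linarith
  have hn0 : (0:ℝ) < (n : ℝ) := Nat.cast_pos.2 hn
  obtain ⟨hSInt, hSLe⟩ := vbe_main X hr1 hr2 hmeas hindep hint hmean Finset.univ
  set ε : ℝ := ℓ ^ r * n with hε
  have hε0 : 0 < ε := by positivity
  -- set inclusion
  have hsub : {ω | ℓ * (n : ℝ) ^ (-(1 - 1 / r)) < |∑ i, X i ω| / n}
      ⊆ {ω | ε ≤ |∑ i, X i ω| ^ r} := by
    intro ω hω
    simp only [Set.mem_setOf_eq] at hω ⊢
    have hthr : ℓ * (n : ℝ) ^ (1 / r) ≤ |∑ i, X i ω| := by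
      have h1 : ℓ * (n : ℝ) ^ (-(1 - 1 / r)) * n ≤ |∑ i, X i ω| :=
        ((lt_div_iff₀ hn0).1 hω).le
      have h2 : (n : ℝ) ^ (-(1 - 1 / r)) * n = (n : ℝ) ^ (1 / r) := by
        have : (n : ℝ) = (n : ℝ) ^ (1:ℝ) := (Real.rpow_one _).symm
        calc (n : ℝ) ^ (-(1 - 1 / r)) * n = (n : ℝ) ^ (-(1 - 1 / r)) * (n:ℝ) ^ (1:ℝ) := by
              rw [Real.rpow_one]
          _ = (n : ℝ) ^ (-(1 - 1 / r) + 1) := (Real.rpow_add hn0 _ _).symm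
          _ = (n : ℝ) ^ (1 / r) := by ring_nf
      calc ℓ * (n : ℝ) ^ (1 / r) = ℓ * (n : ℝ) ^ (-(1 - 1 / r)) * n := by
            rw [mul_assoc, h2]
        _ ≤ |∑ i, X i ω| := h1
    have hbase : 0 ≤ ℓ * (n : ℝ) ^ (1 / r) := by positivity
    have := Real.rpow_le_rpow hbase hthr hr0.le
    have heq : (ℓ * (n : ℝ) ^ (1 / r)) ^ r = ε := by
      rw [Real.mul_rpow hℓ.le (Real.rpow_nonneg hn0.le _), ← Real.rpow_mul hn0.le,
        one_div, inv_mul_cancel₀ hr0.ne', Real.rpow_one, hε]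
    rw [heq] at this
    exact this
  -- Markov
  have hmarkov : ε * (μ {ω | ε ≤ |∑ i, X i ω| ^ r}).toReal
      ≤ ∫ ω, |∑ i, X i ω| ^ r ∂μ :=
    mul_meas_ge_le_integral_of_nonneg
      (Filter.Eventually.of_forall fun ω => Real.rpow_nonneg (abs_nonneg _) r) hSInt ε
  have hμfin : μ {ω | ε ≤ |∑ i, X i ω| ^ r} ≠ ⊤ := measure_ne_top μ _
  have hmono := measure_mono (μ := μ) hsub
  -- convert
  have hbound : ∫ ω, |∑ i, X i ω| ^ r ∂μ ≤ 2 * C * n := by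
    have h1 : ∑ i, ∫ ω, |X i ω| ^ r ∂μ ≤ C * n := by
      rw [div_mul_eq_mul_div, one_mul, div_le_iff₀ hn0] at hmom
      exact hmom
    calc ∫ ω, |∑ i, X i ω| ^ r ∂μ ≤ 2 * ∑ i, ∫ ω, |X i ω| ^ r ∂μ := hSLe
      _ ≤ 2 * (C * n) := by linarith
      _ = 2 * C * n := by ring
  have hfinal : (μ {ω | ε ≤ |∑ i, X i ω| ^ r}).toReal ≤ 2 * C / ℓ ^ r := by
    have h2 : ε * (μ {ω | ε ≤ |∑ i, X i ω| ^ r}).toReal ≤ 2 * C * n := hmarkov.trans hbound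
    have h3 : (μ {ω | ε ≤ |∑ i, X i ω| ^ r}).toReal ≤ 2 * C * n / ε :=
      (le_div_iff₀' hε0).2 h2
    have h4 : 2 * C * n / ε = 2 * C / ℓ ^ r := by
      rw [hε]
      field_simp
    rwa [h4] at h3
  calc μ {ω | ℓ * (n : ℝ) ^ (-(1 - 1 / r)) < |∑ i, X i ω| / n}
      ≤ μ {ω | ε ≤ |∑ i, X i ω| ^ r} := hmono
    _ = ENNReal.ofReal ((μ {ω | ε ≤ |∑ i, X i ω| ^ r}).toReal) :=
        (ENNReal.ofReal_toReal hμfin).symm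
    _ ≤ ENNReal.ofReal (2 * C / ℓ ^ r) := ENNReal.ofReal_le_ofReal hfinal
end

section
/- Let Σ be a symmetric positive semidefinite p×p matrix with λ_min(Σ) ≥ κ_ and λ_max(Σ) ≤ κ̄ where 0 < κ_ ≤ κ̄. Let h : Z → R satisfy h(z) = P(z)'θ + ρ(z) where P(z) ∈ R^p, θ ∈ R^p, E[P(z)P(z)'] = Σ, and let β* minimize E[(h(z) − P(z)'β)²] over β with ‖β‖₀ ≤ s, where s equals the cardinality of the index set S of the s largest |θ_j|. Then √(E[(h − P'β*)²]) ≤ √κ̄·‖θ[Sᶜ]‖₂ + √(E[ρ²]) and ‖θ[T*ᶜ]‖₂ ≤ √(κ̄/κ_)·‖θ[Sᶜ]‖₂ + 2·√(E[ρ²]/κ_), where T* = support(β*). -/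
open MeasureTheory ProbabilityTheory

lemma cs_int {Ω : Type*} [MeasurableSpace Ω] (μ : Measure Ω) (f g : Ω → ℝ)
    (hf : MemLp f 2 μ) (hg : MemLp g 2 μ) :
    ∫ ω, f ω * g ω ∂μ ≤
      Real.sqrt (∫ ω, f ω ^ 2 ∂μ) * Real.sqrt (∫ ω, g ω ^ 2 ∂μ) := by
  have hpq : Real.HolderConjugate 2 2 := Real.holderConjugate_iff.mpr ⟨by norm_num, by norm_num⟩
  have h2 : ENNReal.ofReal (2:ℝ) = 2 := by norm_num
  have hmul : Integrable (fun ω => f ω * g ω) μ := by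
    have hint : (fun ω => f ω * g ω)
        = fun ω => ((f ω + g ω)^2 - f ω^2 - g ω^2)/2 := by funext ω; ring
    rw [hint]
    exact (((hf.add hg).integrable_sq.sub hf.integrable_sq).sub hg.integrable_sq).div_const 2
  have hCS := integral_mul_le_Lp_mul_Lq_of_nonneg (μ := μ) hpq
    (f := fun ω => |f ω|) (g := fun ω => |g ω|)
    (Filter.Eventually.of_forall fun ω => abs_nonneg _)
    (Filter.Eventually.of_forall fun ω => abs_nonneg _)
    (by rw [h2]; simpa [Real.norm_eq_abs] using hf.norm)
    (by rw [h2]; simpa [Real.norm_eq_abs] using hg.norm)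
  have habs : ∫ ω, f ω * g ω ∂μ ≤ ∫ ω, |f ω| * |g ω| ∂μ := by
    refine integral_mono hmul ?_ fun ω => by
      simpa [abs_mul] using le_abs_self (f ω * g ω)
    simpa [abs_mul] using hmul.abs
  refine habs.trans (hCS.trans_eq ?_)
  have e1 : ∀ (u : Ω → ℝ), (∫ ω, |u ω| ^ (2:ℝ) ∂μ) ^ ((1:ℝ)/2)
      = Real.sqrt (∫ ω, u ω ^ 2 ∂μ) := by
    intro u
    rw [Real.sqrt_eq_rpow]
    congr 1
    refine integral_congr_ae (Filter.Eventually.of_forall fun ω => ?_)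
    show |u ω| ^ (2:ℝ) = u ω ^ 2
    rw [show ((2:ℝ)) = ((2:ℕ):ℝ) by norm_num, Real.rpow_natCast, sq_abs]
  rw [e1, e1]

lemma tri_int {Ω : Type*} [MeasurableSpace Ω] (μ : Measure Ω) (f g : Ω → ℝ)
    (hf : MemLp f 2 μ) (hg : MemLp g 2 μ) :
    Real.sqrt (∫ ω, (f ω + g ω) ^ 2 ∂μ) ≤
      Real.sqrt (∫ ω, f ω ^ 2 ∂μ) + Real.sqrt (∫ ω, g ω ^ 2 ∂μ) := by
  have hA : (0:ℝ) ≤ ∫ ω, f ω ^ 2 ∂μ := integral_nonneg fun ω => sq_nonneg _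
  have hB : (0:ℝ) ≤ ∫ ω, g ω ^ 2 ∂μ := integral_nonneg fun ω => sq_nonneg _
  have hmul : Integrable (fun ω => f ω * g ω) μ := by
    have hint : (fun ω => f ω * g ω)
        = fun ω => ((f ω + g ω)^2 - f ω^2 - g ω^2)/2 := by funext ω; ring
    rw [hint]
    exact (((hf.add hg).integrable_sq.sub hf.integrable_sq).sub hg.integrable_sq).div_const 2
  have hexp : ∫ ω, (f ω + g ω) ^ 2 ∂μ
      = (∫ ω, f ω ^ 2 ∂μ) + 2 * (∫ ω, f ω * g ω ∂μ) + ∫ ω, g ω ^ 2 ∂μ := by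
    have : (fun ω => (f ω + g ω)^2) = fun ω => (f ω^2 + 2*(f ω * g ω)) + g ω^2 := by
      funext ω; ring
    have i1 : Integrable (fun ω => f ω ^ 2 + 2 * (f ω * g ω)) μ := by
      exact hf.integrable_sq.add (hmul.const_mul 2)
    rw [this, integral_add i1 hg.integrable_sq,
      integral_add hf.integrable_sq (hmul.const_mul 2), integral_const_mul]
  have hle : ∫ ω, (f ω + g ω) ^ 2 ∂μ
      ≤ (Real.sqrt (∫ ω, f ω ^ 2 ∂μ) + Real.sqrt (∫ ω, g ω ^ 2 ∂μ))^2 := by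
    have := cs_int μ f g hf hg
    rw [hexp, add_sq, Real.sq_sqrt hA, Real.sq_sqrt hB]
    nlinarith
  calc Real.sqrt (∫ ω, (f ω + g ω) ^ 2 ∂μ) ≤ _ := Real.sqrt_le_sqrt hle
  _ = _ := Real.sqrt_sq (by positivity)


/-- Auxiliary bounds from the Uniform Approximation Lemma: if `h = P'θ + ρ` with Gram
matrix eigenvalues in `[κlo, κhi]`, `S` the index set of the `s` largest `|θ_j|`, and
`β` an `s`-sparse `L²`-best approximation coefficient with support `T*`, then
`√E[(h−P'β)²] ≤ √κhi·‖θ[Sᶜ]‖ + √E[ρ²]` and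
`‖θ[T*ᶜ]‖ ≤ √(κhi/κlo)·‖θ[Sᶜ]‖ + 2√(E[ρ²]/κlo)`. -/
theorem stmt18 {Ω : Type*} [MeasurableSpace Ω] (μ : Measure Ω) [IsProbabilityMeasure μ]
    (p s : ℕ) (P : Ω → Fin p → ℝ) (ρ : Ω → ℝ) (θ : Fin p → ℝ) (h : Ω → ℝ)
    (hdef : ∀ ω, h ω = (∑ j, P ω j * θ j) + ρ ω)
    (κlo κhi : ℝ) (hκlo : 0 < κlo) (hκ : κlo ≤ κhi)
    (hmeasP : Measurable P) (hρ : MemLp ρ 2 μ) (hP2 : ∀ j, MemLp (fun ω => P ω j) 2 μ)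
    (hQlo : ∀ δ : Fin p → ℝ, κlo * (∑ j, δ j ^ 2) ≤ ∫ ω, (∑ j, P ω j * δ j) ^ 2 ∂μ)
    (hQhi : ∀ δ : Fin p → ℝ, ∫ ω, (∑ j, P ω j * δ j) ^ 2 ∂μ ≤ κhi * (∑ j, δ j ^ 2))
    (S : Finset (Fin p)) (hScard : S.card = s)
    (hlargest : ∀ j ∈ S, ∀ k ∉ S, |θ k| ≤ |θ j|)
    (β : Fin p → ℝ) (hβs : (Finset.univ.filter fun j => β j ≠ 0).card ≤ s)
    (hopt : ∀ b : Fin p → ℝ, (Finset.univ.filter fun j => b j ≠ 0).card ≤ s →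
      ∫ ω, (h ω - ∑ j, P ω j * β j) ^ 2 ∂μ ≤ ∫ ω, (h ω - ∑ j, P ω j * b j) ^ 2 ∂μ) :
    Real.sqrt (∫ ω, (h ω - ∑ j, P ω j * β j) ^ 2 ∂μ) ≤
        Real.sqrt κhi * Real.sqrt (∑ j ∈ Sᶜ, θ j ^ 2) +
          Real.sqrt (∫ ω, (ρ ω) ^ 2 ∂μ) ∧
      Real.sqrt (∑ j ∈ (Finset.univ.filter fun j => β j ≠ 0)ᶜ, θ j ^ 2) ≤
        Real.sqrt (κhi / κlo) * Real.sqrt (∑ j ∈ Sᶜ, θ j ^ 2) +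
          2 * Real.sqrt ((∫ ω, (ρ ω) ^ 2 ∂μ) / κlo) := by
  have hκhi : (0:ℝ) ≤ κhi := le_trans hκlo.le hκ
  -- MemLp of linear combinations
  have hg2 : ∀ δ : Fin p → ℝ, MemLp (fun ω => ∑ j, P ω j * δ j) 2 μ := by
    intro δ
    have e : (fun ω => ∑ j, P ω j * δ j) = fun ω => ∑ j, δ j * P ω j :=
      funext fun ω => Finset.sum_congr rfl fun j _ => by ring
    rw [e]
    exact memLp_finset_sum (μ := μ) (p := 2) Finset.univ
      (f := fun j ω => δ j * P ω j) fun j _ => (hP2 j).const_mul (δ j)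
  have hh2 : MemLp h 2 μ := by
    have : h = fun ω => (∑ j, P ω j * θ j) + ρ ω := funext hdef
    rw [this]; exact (hg2 θ).add hρ
  set R2 := ∫ ω, (ρ ω) ^ 2 ∂μ with hR2def
  have hR2 : 0 ≤ R2 := integral_nonneg fun ω => sq_nonneg _
  set A := Real.sqrt (∑ j ∈ Sᶜ, θ j ^ 2) with hAdef
  -- the θ restricted to Sᶜ
  set θc : Fin p → ℝ := fun j => if j ∈ S then 0 else θ j with hθc
  set b : Fin p → ℝ := fun j => if j ∈ S then θ j else 0 with hb
  have hsplit : ∀ ω, ∑ j, P ω j * θ j = (∑ j, P ω j * b j) + ∑ j, P ω j * θc j := by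
    intro ω
    rw [← Finset.sum_add_distrib]
    refine Finset.sum_congr rfl fun j _ => ?_
    simp only [hθc, hb]
    split_ifs <;> ring
  have hsumθc : ∑ j, θc j ^ 2 = ∑ j ∈ Sᶜ, θ j ^ 2 := by
    rw [← Finset.sum_subset (Finset.subset_univ Sᶜ)
      (fun j _ hj => by simp only [hθc]; simp [Finset.mem_compl, not_not] at hj; simp [hj])]
    refine Finset.sum_congr rfl fun j hj => ?_
    have : j ∉ S := Finset.mem_compl.mp hj
    simp [hθc, this]
  have hbcard : (Finset.univ.filter fun j => b j ≠ 0).card ≤ s := by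
    refine le_trans (Finset.card_le_card ?_) (le_of_eq hScard)
    intro j hj
    simp only [Finset.mem_filter, hb] at hj
    by_contra hjS
    simp [hjS] at hj
  -- first claim
  have key1 : Real.sqrt (∫ ω, (h ω - ∑ j, P ω j * β j) ^ 2 ∂μ)
      ≤ Real.sqrt κhi * A + Real.sqrt R2 := by
    have h1 := hopt b hbcard
    have h2 : (fun ω => (h ω - ∑ j, P ω j * b j) ^ 2)
        = fun ω => ((∑ j, P ω j * θc j) + ρ ω) ^ 2 := by
      funext ω; rw [hdef ω, hsplit ω]; ring
    have h3 : Real.sqrt (∫ ω, (h ω - ∑ j, P ω j * b j) ^ 2 ∂μ)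
        ≤ Real.sqrt (∫ ω, (∑ j, P ω j * θc j) ^ 2 ∂μ) + Real.sqrt R2 := by
      calc Real.sqrt (∫ ω, (h ω - ∑ j, P ω j * b j) ^ 2 ∂μ)
          = Real.sqrt (∫ ω, ((∑ j, P ω j * θc j) + ρ ω) ^ 2 ∂μ) := by rw [h2]
        _ ≤ _ := tri_int μ _ ρ (hg2 θc) hρ
    have h4 : Real.sqrt (∫ ω, (∑ j, P ω j * θc j) ^ 2 ∂μ) ≤ Real.sqrt κhi * A := by
      rw [hAdef, ← hsumθc, ← Real.sqrt_mul hκhi]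
      exact Real.sqrt_le_sqrt (hQhi θc)
    calc Real.sqrt (∫ ω, (h ω - ∑ j, P ω j * β j) ^ 2 ∂μ)
        ≤ Real.sqrt (∫ ω, (h ω - ∑ j, P ω j * b j) ^ 2 ∂μ) := Real.sqrt_le_sqrt h1
      _ ≤ _ := h3.trans (by linarith)
  refine ⟨key1, ?_⟩
  -- second claim
  set T := Finset.univ.filter fun j => β j ≠ 0 with hT
  have hsumT : ∑ j ∈ Tᶜ, θ j ^ 2 ≤ ∑ j, (θ j - β j) ^ 2 := by
    have e : ∀ j ∈ Tᶜ, θ j ^ 2 = (θ j - β j) ^ 2 := by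
      intro j hj
      have : β j = 0 := by
        have := Finset.mem_compl.mp hj
        simpa [hT] using this
      rw [this]; ring
    rw [Finset.sum_congr rfl e]
    exact Finset.sum_le_sum_of_subset_of_nonneg (Finset.subset_univ _)
      fun j _ _ => sq_nonneg _
  have hmem : MemLp (fun ω => h ω - ∑ j, P ω j * β j) 2 μ := hh2.sub (hg2 β)
  have hdecomp : (fun ω => (∑ j, P ω j * (θ j - β j)) ^ 2)
      = fun ω => ((h ω - ∑ j, P ω j * β j) + (- ρ ω)) ^ 2 := by
    funext ω
    have e : ∑ j, P ω j * (θ j - β j)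
        = (∑ j, P ω j * θ j) - ∑ j, P ω j * β j := by
      rw [← Finset.sum_sub_distrib]
      exact Finset.sum_congr rfl fun j _ => by ring
    rw [hdef ω, e]; ring
  have hQbd : Real.sqrt (∫ ω, (∑ j, P ω j * (θ j - β j)) ^ 2 ∂μ)
      ≤ Real.sqrt κhi * A + 2 * Real.sqrt R2 := by
    have tr : Real.sqrt (∫ ω, ((h ω - ∑ j, P ω j * β j) + (- ρ ω)) ^ 2 ∂μ)
        ≤ Real.sqrt (∫ ω, (h ω - ∑ j, P ω j * β j) ^ 2 ∂μ)
          + Real.sqrt (∫ ω, (- ρ ω) ^ 2 ∂μ) := tri_int μ _ _ hmem hρ.neg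
    have eneg : (∫ ω, (- ρ ω) ^ 2 ∂μ) = R2 := by
      rw [hR2def]; exact integral_congr_ae (Filter.Eventually.of_forall fun ω => by ring)
    rw [hdecomp]
    refine tr.trans ?_
    rw [eneg]
    linarith [key1]
  have hlo : Real.sqrt (∑ j ∈ Tᶜ, θ j ^ 2)
      ≤ Real.sqrt ((∫ ω, (∑ j, P ω j * (θ j - β j)) ^ 2 ∂μ)) / Real.sqrt κlo := by
    have h5 : ∑ j ∈ Tᶜ, θ j ^ 2 ≤ (∫ ω, (∑ j, P ω j * (θ j - β j)) ^ 2 ∂μ) / κlo := by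
      rw [le_div_iff₀ hκlo]
      calc (∑ j ∈ Tᶜ, θ j ^ 2) * κlo ≤ (∑ j, (θ j - β j) ^ 2) * κlo := by
            exact mul_le_mul_of_nonneg_right hsumT hκlo.le
        _ = κlo * ∑ j, (θ j - β j) ^ 2 := by ring
        _ ≤ _ := hQlo _
    refine (Real.sqrt_le_sqrt h5).trans (le_of_eq ?_)
    rw [Real.sqrt_div (integral_nonneg fun ω => sq_nonneg _)]
  have hfin : Real.sqrt ((∫ ω, (∑ j, P ω j * (θ j - β j)) ^ 2 ∂μ)) / Real.sqrt κlo
      ≤ Real.sqrt (κhi / κlo) * A + 2 * Real.sqrt (R2 / κlo) := by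
    have hsκlo : 0 < Real.sqrt κlo := Real.sqrt_pos.mpr hκlo
    rw [div_le_iff₀ hsκlo]
    have e1 : Real.sqrt (κhi / κlo) * Real.sqrt κlo = Real.sqrt κhi := by
      rw [← Real.sqrt_mul (by positivity), div_mul_cancel₀ _ (ne_of_gt hκlo)]
    have e2 : Real.sqrt (R2 / κlo) * Real.sqrt κlo = Real.sqrt R2 := by
      rw [← Real.sqrt_mul (by positivity), div_mul_cancel₀ _ (ne_of_gt hκlo)]
    calc Real.sqrt (∫ ω, (∑ j, P ω j * (θ j - β j)) ^ 2 ∂μ)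
        ≤ Real.sqrt κhi * A + 2 * Real.sqrt R2 := hQbd
      _ = (Real.sqrt (κhi / κlo) * A + 2 * Real.sqrt (R2 / κlo)) * Real.sqrt κlo := by
        rw [add_mul, mul_assoc (2:ℝ), e2, mul_right_comm, e1]
  exact hlo.trans hfin
end
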